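/- Let F ∈ F be a symmetric entourage with F = F⁻¹ and (n, n+1) ∈ F for all n ∈ ω. Define P₀ = F[0] and P_{n+1} = F[P_n] \ (P₀ ∪ … ∪ P_n). Then the sets P_n cover ω, and the two families {P_{2n} : n ∈ ω} and {P_{2n+1} : n ∈ ω} are each F-disjoint. -/
import Mathlib


open Set Pointwise Filter Topology

/-- Ball of radius `E` around `x`. -/
def cball {X : Type*} (E : Set (X × X)) (x : X) : Set X := {y | (x, y) ∈ E}

/-- Ball of radius `E` around a set `A`. -/
def cballSet {X : Type*} (E : Set (X × X)) (A : Set X) : Set X := ⋃ a ∈ A, cball E a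

/-- The condition on `φ : ω → [ω]^{<ω}` defining the family `Φ`. -/
def IsPhi (φ : ℕ → Finset ℕ) : Prop := (∀ n, n ∈ φ n) ∧ ∀ n, {m | n ∈ φ m}.Finite

/-- The coarse structure `F` on `ω`. -/
def Ffam : Set (Set (ℕ × ℕ)) :=
  {E | ∃ φ : ℕ → Finset ℕ, IsPhi φ ∧ E ⊆ {p : ℕ × ℕ | p.2 ∈ φ p.1}}

/-- the sets `P n` cover `ω` and the even and odd families are `F`-disjoint. -/
theorem Ffam_partition (F : Set (ℕ × ℕ)) (hF : F ∈ Ffam)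
    (hsym : ∀ p : ℕ × ℕ, p ∈ F → (p.2, p.1) ∈ F)
    (hsucc : ∀ n : ℕ, (n, n + 1) ∈ F)
    (P : ℕ → Set ℕ) (hP0 : P 0 = cball F 0)
    (hPs : ∀ n : ℕ, P (n + 1) = cballSet F (P n) \ ⋃ i ≤ n, P i) :
    (⋃ n, P n) = univ ∧
    (∀ m n : ℕ, P (2 * m) ≠ P (2 * n) → cballSet F (P (2 * m)) ∩ P (2 * n) = ∅) ∧
    (∀ m n : ℕ, P (2 * m + 1) ≠ P (2 * n + 1) →
      cballSet F (P (2 * m + 1)) ∩ P (2 * n + 1) = ∅) := by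
  -- Step lemma: the ball around `P n` is contained in the first `n+2` pieces.
  have hstep : ∀ n, cballSet F (P n) ⊆ ⋃ i, ⋃ _ : i ≤ n + 1, P i := by
    intro n x hx
    by_cases h : x ∈ ⋃ i, ⋃ _ : i ≤ n, P i
    · obtain ⟨i, hi, hxi⟩ := mem_iUnion₂.1 h
      exact mem_iUnion₂.2 ⟨i, hi.trans (Nat.le_succ n), hxi⟩
    · exact mem_iUnion₂.2 ⟨n + 1, le_refl _, by rw [hPs n]; exact ⟨hx, h⟩⟩
  -- Pairwise disjointness.
  have hdisj : ∀ m n x, m < n → x ∈ P m → x ∈ P n → False := by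
    intro m n x hmn hxm hxn
    obtain ⟨k, rfl⟩ : ∃ k, n = k + 1 := ⟨n - 1, by omega⟩
    rw [hPs k] at hxn
    exact hxn.2 (mem_iUnion₂.2 ⟨m, by omega, hxm⟩)
  -- Key: far-apart pieces are `F`-disjoint (one direction).
  have hkey : ∀ a b, a + 2 ≤ b → cballSet F (P a) ∩ P b = ∅ := by
    intro a b hab
    ext x
    simp only [mem_inter_iff, mem_empty_iff_false, iff_false, not_and]
    intro hx1 hx2
    obtain ⟨i, hi, hxi⟩ := mem_iUnion₂.1 (hstep a hx1)
    exact hdisj i b x (by omega) hxi hx2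
  -- Symmetry of `F`-disjointness.
  have hsymkey : ∀ a b, cballSet F (P a) ∩ P b = ∅ → cballSet F (P b) ∩ P a = ∅ := by
    intro a b h
    ext x
    simp only [mem_inter_iff, mem_empty_iff_false, iff_false, not_and]
    intro hx1 hx2
    obtain ⟨y, hy, hxy⟩ := mem_iUnion₂.1 hx1
    have hyx : (x, y) ∈ F := hsym (y, x) hxy
    have : y ∈ cballSet F (P a) ∩ P b :=
      ⟨mem_iUnion₂.2 ⟨x, hx2, hyx⟩, hy⟩
    rw [h] at this
    exact this
  -- Combined disjointness for same-parity distinct indices.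
  have hboth : ∀ a b : ℕ, a ≠ b → a % 2 = b % 2 → cballSet F (P a) ∩ P b = ∅ := by
    intro a b hne hpar
    rcases lt_or_gt_of_ne hne with h | h
    · exact hkey a b (by omega)
    · exact hsymkey b a (hkey b a (by omega))
  -- `1 ∈ P 0`.
  have h1 : (1 : ℕ) ∈ P 0 := by rw [hP0]; exact hsucc 0
  -- Coverage for positive numbers.
  have hcov : ∀ k : ℕ, 1 ≤ k → ∃ i, k ∈ P i := by
    intro k hk
    induction k with
    | zero => omega
    | succ k ih =>
      rcases Nat.eq_zero_or_pos k with rfl | hk'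
      · exact ⟨0, h1⟩
      · obtain ⟨i, hi⟩ := ih hk'
        have : k + 1 ∈ cballSet F (P i) := mem_iUnion₂.2 ⟨k, hi, hsucc k⟩
        obtain ⟨j, _, hj⟩ := mem_iUnion₂.1 (hstep i this)
        exact ⟨j, hj⟩
  refine ⟨?_, ?_, ?_⟩
  · ext x
    simp only [mem_iUnion, mem_univ, iff_true]
    rcases Nat.eq_zero_or_pos x with rfl | hx
    · have h0 : (0 : ℕ) ∈ cballSet F (P 0) :=
        mem_iUnion₂.2 ⟨1, h1, hsym (0, 1) (hsucc 0)⟩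
      obtain ⟨j, _, hj⟩ := mem_iUnion₂.1 (hstep 0 h0)
      exact ⟨j, hj⟩
    · exact hcov x hx
  · intro m n hne
    have hmn : m ≠ n := fun h => hne (by rw [h])
    exact hboth (2 * m) (2 * n) (by omega) (by omega)
  · intro m n hne
    have hmn : m ≠ n := fun h => hne (by rw [h])
    exact hboth (2 * m + 1) (2 * n + 1) (by omega) (by omega)
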